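/- Let M be an interval module with interval I_M ⊆ ℝ̄ⁿ. For any x ∈ I_M, the diagonal distance to the upper boundary satisfies dl(x, U(I_M)) = sup{δ ∈ ℝ̄ : x + δ⃗ ∈ I_M}, and symmetrically dl(x, L(I_M)) = sup{δ ∈ ℝ̄ : x − δ⃗ ∈ I_M}. -/

import Mathlib

open scoped ENNReal NNReal
open Filter
noncomputable section
attribute [local instance] Classical.propDecidable
set_option linter.unusedVariables false

/-- Points of the poset ℝⁿ. The product instance gives the pointwise partial order
and the sup-norm metric. -/
abbrev Pt (n : ℕ) := Fin n → ℝ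

/-- The diagonal vector δ⃗ = (δ,...,δ). -/
def diag (n : ℕ) (δ : ℝ) : Pt n := fun _ => δ

lemma le_add_diag {n : ℕ} (x : Pt n) {δ : ℝ} (hδ : 0 ≤ δ) : x ≤ x + diag n δ :=
  fun _ => le_add_of_nonneg_right hδ

/-- A (p.f.d.-agnostic) persistence module over the poset ℝⁿ with values in
k-vector spaces: a functor from ℝⁿ to Vec. -/
structure PersMod (n : ℕ) (k : Type*) [Field k] where
  V : Pt n → Type*
  [addgrp : ∀ x, AddCommGroup (V x)]
  [mod : ∀ x, Module k (V x)]
  ρ : ∀ {x y : Pt n}, x ≤ y → (V x →ₗ[k] V y)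
  ρ_id : ∀ x : Pt n, ρ (le_refl x) = LinearMap.id
  ρ_comp : ∀ {x y z : Pt n} (h1 : x ≤ y) (h2 : y ≤ z), ρ (h1.trans h2) = (ρ h2).comp (ρ h1)

attribute [instance] PersMod.addgrp PersMod.mod

variable {n : ℕ} {k : Type*} [Field k]

/-- A morphism (natural transformation) of persistence modules. -/
structure PersHom (M N : PersMod n k) where
  app : ∀ x, M.V x →ₗ[k] N.V x
  natural : ∀ {x y : Pt n} (h : x ≤ y), (app y).comp (M.ρ h) = (N.ρ h).comp (app x)

/-- A δ-interleaving between M and N: families φ_x : M_x → N_{x+δ⃗},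
ψ_x : N_x → M_{x+δ⃗} satisfying square and triangular commutativity. -/
def PersMod.Interleaved (M N : PersMod n k) (δ : ℝ≥0) : Prop :=
  ∃ (φ : ∀ x : Pt n, M.V x →ₗ[k] N.V (x + diag n (δ : ℝ)))
    (ψ : ∀ x : Pt n, N.V x →ₗ[k] M.V (x + diag n (δ : ℝ))),
    (∀ {x y : Pt n} (h : x ≤ y),
        (φ y).comp (M.ρ h) = (N.ρ (add_le_add_left h _)).comp (φ x)) ∧
    (∀ {x y : Pt n} (h : x ≤ y),
        (ψ y).comp (N.ρ h) = (M.ρ (add_le_add_left h _)).comp (ψ x)) ∧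
    (∀ x : Pt n, M.ρ ((le_add_diag x δ.coe_nonneg).trans (le_add_diag _ δ.coe_nonneg))
        = (ψ (x + diag n (δ : ℝ))).comp (φ x)) ∧
    (∀ x : Pt n, N.ρ ((le_add_diag x δ.coe_nonneg).trans (le_add_diag _ δ.coe_nonneg))
        = (φ (x + diag n (δ : ℝ))).comp (ψ x))

/-- The interleaving distance (∞ if no interleaving exists). -/
def PersMod.dI (M N : PersMod n k) : ℝ≥0∞ :=
  ⨅ (δ : ℝ≥0) (_ : M.Interleaved N δ), (δ : ℝ≥0∞)

/-- The diagonal shift M_{→d}. -/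
def PersMod.dshift (M : PersMod n k) (d : ℝ) : PersMod n k where
  V x := M.V (x + diag n d)
  ρ h := M.ρ (add_le_add_left h _)
  ρ_id x := M.ρ_id _
  ρ_comp h1 h2 := M.ρ_comp _ _

/-- M is c-trivial: every structure map over a diagonal shift by c is zero. -/
def PersMod.DTrivial (M : PersMod n k) (c : ℝ≥0) : Prop :=
  ∀ x : Pt n, M.ρ (le_add_diag x c.coe_nonneg) = 0

/-- The 1-parameter slice of M along the diagonal line through x. -/
def PersMod.slice (M : PersMod n k) (x : Pt n) : PersMod 1 k where
  V t := M.V (x + diag n (t 0))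
  ρ {t t'} h := M.ρ (fun i => add_le_add_right (h 0) (x i))
  ρ_id t := M.ρ_id _
  ρ_comp h1 h2 := M.ρ_comp _ _

/-- δ* = sup over diagonal lines of the slice interleaving distances. -/
def deltaStar (M N : PersMod n k) : ℝ≥0∞ :=
  ⨆ x : Pt n, (M.slice x).dI (N.slice x)

/-- Finite direct sum of persistence modules. -/
def dirSum {ι : Type} [Fintype ι] (Ms : ι → PersMod n k) : PersMod n k where
  V x := ∀ i, (Ms i).V x
  ρ h := LinearMap.pi (fun i => ((Ms i).ρ h).comp (LinearMap.proj i))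
  ρ_id x := by
    apply LinearMap.ext; intro v; funext i
    simp [(Ms i).ρ_id]
  ρ_comp h1 h2 := by
    apply LinearMap.ext; intro v; funext i
    show ((Ms i).ρ (h1.trans h2)) (v i) = _
    rw [(Ms i).ρ_comp h1 h2]; rfl

/-- Zigzag reachability inside a set: p ≤ p₁ ≥ p₂ ≤ ... with all points in A. -/
def Zigzag (A : Set (Pt n)) : Pt n → Pt n → Prop :=
  Relation.ReflTransGen (fun a b => a ∈ A ∧ b ∈ A ∧ (a ≤ b ∨ b ≤ a))

/-- An interval: nonempty, order-convex, zigzag-connected. -/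
def IsPInterval (I : Set (Pt n)) : Prop :=
  I.Nonempty ∧ (∀ p ∈ I, ∀ q ∈ I, ∀ r, p ≤ r → r ≤ q → r ∈ I) ∧
    ∀ p ∈ I, ∀ q ∈ I, Zigzag I p q

/-- Q is a (zigzag-)connected component of A. -/
def IsComponent (A Q : Set (Pt n)) : Prop :=
  ∃ p ∈ A, Q = {q | Zigzag A p q}

/-- The fibre of the interval module with interval I: k on I, 0 elsewhere,
realised as a submodule of k. -/
def subOf (k : Type*) [Field k] (I : Set (Pt n)) (x : Pt n) : Submodule k k :=
  if x ∈ I then ⊤ else ⊥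

/-- The canonical map between fibres: identity within I, zero otherwise. -/
def stepFun (I : Set (Pt n)) (x y : Pt n) :
    ↥(subOf k I x) →ₗ[k] ↥(subOf k I y) where
  toFun v := ⟨if y ∈ I then (v : k) else 0, by
    by_cases hy : y ∈ I
    · rw [if_pos hy]; simp only [subOf, if_pos hy]; exact Submodule.mem_top
    · rw [if_neg hy]; exact Submodule.zero_mem _⟩
  map_add' a b := by
    apply Subtype.ext
    show (if y ∈ I then ((a + b : ↥(subOf k I x)) : k) else 0) =
      (if y ∈ I then (a : k) else 0) + (if y ∈ I then (b : k) else 0)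
    by_cases hy : y ∈ I
    · rw [if_pos hy, if_pos hy, if_pos hy]; rfl
    · rw [if_neg hy, if_neg hy, if_neg hy, add_zero]
  map_smul' c a := by
    apply Subtype.ext
    show (if y ∈ I then ((c • a : ↥(subOf k I x)) : k) else 0) =
      c • (if y ∈ I then (a : k) else 0)
    by_cases hy : y ∈ I
    · rw [if_pos hy, if_pos hy]; rfl
    · rw [if_neg hy, if_neg hy, smul_zero]

/-- The interval module with interval I. -/
def IntervalMod (k : Type*) [Field k] (I : Set (Pt n)) (hI : IsPInterval I) :
    PersMod n k where
  V x := ↥(subOf k I x)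
  ρ {x y} _ := stepFun I x y
  ρ_id x := by
    apply LinearMap.ext; intro v
    apply Subtype.ext
    show (if x ∈ I then (v : k) else 0) = (v : k)
    by_cases hx : x ∈ I
    · rw [if_pos hx]
    · have hv : (v : k) = 0 := by
        have h := v.2; simp only [subOf, if_neg hx] at h; exact (Submodule.mem_bot k).1 h
      rw [if_neg hx, hv]
  ρ_comp {x y z} h1 h2 := by
    apply LinearMap.ext; intro v
    apply Subtype.ext
    show (if z ∈ I then (v : k) else 0) = (if z ∈ I then (if y ∈ I then (v : k) else 0) else 0)
    by_cases hz : z ∈ I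
    · by_cases hy : y ∈ I
      · rw [if_pos hz, if_pos hz, if_pos hy]
      · have hx : x ∉ I := fun hx => hy (hI.2.1 x hx z hz y h1 h2)
        have hv : (v : k) = 0 := by
          have h := v.2; simp only [subOf, if_neg hx] at h; exact (Submodule.mem_bot k).1 h
        rw [if_pos hz, if_pos hz, if_neg hy, hv]
    · rw [if_neg hz, if_neg hz]

/-- Lower boundary L(I). -/
def lowerBd (I : Set (Pt n)) : Set (Pt n) :=
  {x | x ∈ closure I ∧ ∀ y : Pt n, (∀ i, y i < x i) → y ∉ I}

/-- Upper boundary U(I). -/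
def upperBd (I : Set (Pt n)) : Set (Pt n) :=
  {x | x ∈ closure I ∧ ∀ y : Pt n, (∀ i, x i < y i) → y ∉ I}

/-- Diagonal distance dl(x, A): the infimum of sup-norm distances from x to
points of A along the diagonal line Δ_x, ∞ when Δ_x ∩ A = ∅. -/
def dl (x : Pt n) (A : Set (Pt n)) : ℝ≥0∞ :=
  ⨅ (α : ℝ) (_ : x + diag n α ∈ A), ENNReal.ofReal |α|

/-- d_triv^{(M,N)}(x) = max(dl(x,U(I_M))/2, dl(x,L(I_N))/2). -/
def dtriv (IM IN : Set (Pt n)) (x : Pt n) : ℝ≥0∞ :=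
  max (dl x (upperBd IM) / 2) (dl x (lowerBd IN) / 2)

/-- An intersection component with interval Q is δ_{(M,N)}-trivializable. -/
def Trivializable (IM IN Q : Set (Pt n)) (δ : ℝ≥0∞) : Prop :=
  ∀ x ∈ Q, dtriv IM IN x < δ

/-- (M,N)-validity of an intersection component with interval Q. -/
def MNValid (IM IN Q : Set (Pt n)) : Prop :=
  ∀ x ∈ Q, (∀ y : Pt n, y ≤ x → y ∈ IM → y ∈ IN) ∧
    (∀ z : Pt n, x ≤ z → z ∈ IN → z ∈ IM)

/-- The interval of the shifted module N_{→d}. -/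
def shiftSet (I : Set (Pt n)) (d : ℝ) : Set (Pt n) := {x | x + diag n d ∈ I}

/-- A vertex of (the boundary of) a set: a boundary point through which no
nontrivial line segment of the boundary passes. -/
def IsVertex (I : Set (Pt n)) (x : Pt n) : Prop :=
  x ∈ frontier I ∧
    ¬ ∃ v : Pt n, v ≠ 0 ∧ ∃ ε > (0:ℝ), ∀ t : ℝ, |t| < ε → x + t • v ∈ frontier I

/-- An axis-aligned (possibly degenerate) rectangle. -/
def IsRect (R : Set (Pt n)) : Prop := ∃ a b : Pt n, a ≤ b ∧ R = Set.Icc a b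

/-- A discretely presented interval: a finite union of rectangles. -/
def DiscPresented (I : Set (Pt n)) : Prop :=
  ∃ F : Finset (Set (Pt n)), (∀ R ∈ F, IsRect R) ∧ I = ⋃ R ∈ F, (R : Set (Pt n))

/-- f is a facet of I orthogonal to direction i: contained in a hyperplane
{y_i = c}, contained in the lower or upper boundary, and (n−1)-dimensional
(contains a full hyperplane patch around one of its points). -/
def IsFacetDir (I : Set (Pt n)) (f : Set (Pt n)) (i : Fin n) : Prop :=
  ∃ c : ℝ, f ⊆ {y | y i = c} ∧ (f ⊆ lowerBd I ∨ f ⊆ upperBd I) ∧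
    ∃ z ∈ f, ∃ ε > (0:ℝ), ∀ y : Pt n, y i = c → dist y z < ε → y ∈ f

/-- The set D(x) of the four diagonal boundary distances. -/
def candD (IM IN : Set (Pt n)) (x : Pt n) : Set ℝ≥0∞ :=
  {dl x (lowerBd IM), dl x (lowerBd IN), dl x (upperBd IM), dl x (upperBd IN)}

/-- The candidate set S. -/
def candS (IM IN : Set (Pt n)) : Set ℝ≥0∞ :=
  {d | ∃ x : Pt n, (IsVertex IM x ∨ IsVertex IN x) ∧
    (d ∈ candD IM IN x ∨ 2 * d ∈ candD IM IN x)}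

/-- One-sided limit lim_{ε→0+} f(x − ε v) (junk value if the limit fails to exist). -/
def dlim (f : Pt n → ℤ) (x v : Pt n) : ℤ :=
  limUnder (nhdsWithin (0:ℝ) (Set.Ioi 0)) (fun ε : ℝ => f (x - ε • v))

/-- The indicator vector Σ_{i ∈ s} e_i. -/
def basisVec (n : ℕ) (s : Finset (Fin n)) : Pt n := fun i => if i ∈ s then 1 else 0

/-- The differential Δf(x) = Σ_k (−1)^k Σ_{|s|=k} lim_{ε→0+} f(x − ε Σ_{i∈s} e_i). -/
def diffl (f : Pt n → ℤ) (x : Pt n) : ℤ :=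
  ∑ s : Finset (Fin n), (-1 : ℤ) ^ s.card * dlim f x (basisVec n s)

/-- Right continuity of f : ℝⁿ → ℤ. -/
def RightCont (f : Pt n → ℤ) : Prop :=
  ∀ x : Pt n, Filter.Tendsto f (nhdsWithin x (Set.Ici x)) (nhds (f x))

/-- A nice function: right continuous, finitely supported differential,
support bounded below. -/
def NiceFn (f : Pt n → ℤ) : Prop :=
  RightCont f ∧ {x | diffl f x ≠ 0}.Finite ∧ ∃ a : ℝ, ∀ x, f x ≠ 0 → ∀ i, a ≤ x i

/-- Positive part Δf₊. -/
def difflp (f : Pt n → ℤ) (x : Pt n) : ℤ := max (diffl f x) 0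
/-- Negative part Δf₋. -/
def difflm (f : Pt n → ℤ) (x : Pt n) : ℤ := min (diffl f x) 0

/-- Σ_{y ≤ x} g(y), as a finite sum over the support. -/
def sumLe (g : Pt n → ℤ) (x : Pt n) : ℤ := ∑ᶠ y ∈ {y : Pt n | y ≤ x}, g y

/-- The δ-extension f^{+δ}(x) = f_{Σ+}(x+δ⃗) + f_{Σ−}(x−δ⃗). -/
def extend (f : Pt n → ℤ) (δ : ℝ) (x : Pt n) : ℤ :=
  sumLe (difflp f) (x + diag n δ) + sumLe (difflm f) (x - diag n δ)

/-- The δ-shrinking f^{−δ}(x) = f_{Σ−}(x+δ⃗) + f_{Σ+}(x−δ⃗). -/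
def shrink (f : Pt n → ℤ) (δ : ℝ) (x : Pt n) : ℤ :=
  sumLe (difflm f) (x + diag n δ) + sumLe (difflp f) (x - diag n δ)

/-- d₊(f,g) = inf{δ : f ≤ g^{+δ}, g ≤ f^{+δ}}. -/
def dplus (f g : Pt n → ℤ) : ℝ≥0∞ :=
  ⨅ (δ : ℝ≥0) (_ : (∀ x, f x ≤ extend g δ x) ∧ (∀ x, g x ≤ extend f δ x)), (δ : ℝ≥0∞)

/-- d₋(f,g) = inf{δ : f ≥ g^{−δ}, g ≥ f^{−δ}}. -/
def dminus (f g : Pt n → ℤ) : ℝ≥0∞ :=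
  ⨅ (δ : ℝ≥0) (_ : (∀ x, shrink g δ x ≤ f x) ∧ (∀ x, shrink f δ x ≤ g x)), (δ : ℝ≥0∞)

/-- The dimension distance d₀ = min(d₋, d₊). -/
def d0 (f g : Pt n → ℤ) : ℝ≥0∞ := min (dminus f g) (dplus f g)

/-- The dimension function dm M(x) = dim M_x (as an integer). -/
def dmFun (M : PersMod n k) : Pt n → ℤ := fun x => (Module.finrank k (M.V x) : ℤ)

/-- A nice persistence module: all structure maps over sufficiently small
diagonal shifts are injective or surjective. -/
def PersMod.Nice (M : PersMod n k) : Prop :=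
  ∃ ε₀ > (0:ℝ), ∀ ε : ℝ, ∀ h0 : 0 < ε, ε < ε₀ → ∀ x : Pt n,
    Function.Injective (M.ρ (le_add_diag x h0.le)) ∨
      Function.Surjective (M.ρ (le_add_diag x h0.le))

/-- Composition ρ_i ∘ ... ∘ ρ₁ of a chain of linear maps. -/
def chainComp {K : Type*} [Field K] (V : ℕ → Type*) [∀ i, AddCommGroup (V i)]
    [∀ i, Module K (V i)] (ρ : ∀ i, V i →ₗ[K] V (i+1)) : ∀ i, V 0 →ₗ[K] V i
  | 0 => LinearMap.id
  | (i+1) => (ρ i).comp (chainComp V ρ i)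


lemma add_diag_zero {n : ℕ} (x : Pt n) : x + diag n 0 = x := by
  funext i; simp [diag]

lemma key_upper {n : ℕ} (I : Set (Pt n)) (hI : IsPInterval I) (x : Pt n)
    (hx : x ∈ I) :
    dl x (upperBd I) = sSup ((fun δ : ℝ => ENNReal.ofReal δ) ''
        {δ : ℝ | x + diag n δ ∈ I}) := by
  set S : Set ℝ := {δ : ℝ | x + diag n δ ∈ I} with hS
  have h0S : (0:ℝ) ∈ S := by simpa [hS, add_diag_zero] using hx
  have hSc : ∀ δ ∈ S, max δ 0 ∈ S := by
    intro δ hδ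
    rcases le_or_gt 0 δ with h | h
    · simpa [max_eq_left h] using hδ
    · simpa [max_eq_right h.le] using h0S
  -- direction sup ≤ dl
  have h1 : sSup ((fun δ : ℝ => ENNReal.ofReal δ) '' S) ≤ dl x (upperBd I) := by
    refine le_iInf fun α => le_iInf fun hα => sSup_le ?_
    rintro _ ⟨δ, hδ, rfl⟩
    apply ENNReal.ofReal_le_ofReal
    by_contra h
    push_neg at h
    exact hα.2 (x + diag n δ)
      (fun i => by
        have : α < δ := lt_of_le_of_lt (le_abs_self α) h
        simpa [diag] using add_lt_add_left this (x i)) hδ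
  refine le_antisymm ?_ h1
  rcases eq_or_ne (sSup ((fun δ : ℝ => ENNReal.ofReal δ) '' S)) ⊤ with hT | hT
  · rw [hT]; exact le_top
  -- bounded above
  have hbdd : BddAbove S := by
    refine ⟨(sSup ((fun δ : ℝ => ENNReal.ofReal δ) '' S)).toReal, fun δ hδ => ?_⟩
    rcases le_or_gt δ 0 with h | h
    · exact h.trans ENNReal.toReal_nonneg
    · have : ENNReal.ofReal δ ≤ sSup ((fun δ : ℝ => ENNReal.ofReal δ) '' S) :=
        le_sSup ⟨δ, hδ, rfl⟩
      exact (ENNReal.ofReal_le_iff_le_toReal hT).mp this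
  have hn : n ≠ 0 := by
    rintro rfl
    obtain ⟨m, hm⟩ := hbdd
    have heq : x + diag 0 (m+1) = x := by funext i; exact i.elim0
    have : m + 1 ∈ S := show x + diag 0 (m+1) ∈ I by rw [heq]; exact hx
    have := hm this
    linarith
  have hne : Nonempty (Fin n) := ⟨⟨0, Nat.pos_of_ne_zero hn⟩⟩
  set s := sSup S with hs
  have hs0 : 0 ≤ s := le_csSup hbdd h0S
  -- x + s⃗ ∈ upperBd I
  have hclos : x + diag n s ∈ closure I := by
    have h1 : s ∈ closure S := csSup_mem_closure ⟨0, h0S⟩ hbdd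
    have hc : Continuous (fun δ : ℝ => x + diag n δ) := by
      apply continuous_pi
      intro i
      show Continuous fun δ : ℝ => x i + δ
      fun_prop
    exact map_mem_closure (f := fun δ : ℝ => x + diag n δ) (x := s) hc h1 (fun δ hδ => hδ)
  have hub : x + diag n s ∈ upperBd I := by
    refine ⟨hclos, fun y hy hyI => ?_⟩
    set ε := Finset.univ.inf' (Finset.univ_nonempty) (fun i => y i - (x i + s)) with hε
    have hε0 : 0 < ε := by
      rw [hε, Finset.lt_inf'_iff]
      intro i _
      have := hy i
      simp [diag] at this
      linarith
    have hmem : x + diag n (s + ε) ∈ I := by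
      refine hI.2.1 x hx y hyI _ (fun i => ?_) (fun i => ?_)
      · simp [diag]; linarith
      · have hle : ε ≤ y i - (x i + s) := Finset.inf'_le _ (Finset.mem_univ i)
        simp [diag]; linarith
    have : s + ε ≤ s := le_csSup hbdd hmem
    linarith
  have h2 : dl x (upperBd I) ≤ ENNReal.ofReal s := by
    have := iInf_le (fun α => ⨅ (_ : x + diag n α ∈ upperBd I), ENNReal.ofReal |α|) s
    refine this.trans ?_
    rw [abs_of_nonneg hs0]
    exact iInf_le _ hub
  refine h2.trans ?_
  refine ENNReal.le_of_forall_pos_le_add fun ε hε hlt => ?_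
  obtain ⟨δ, hδ, hδ2⟩ := exists_lt_of_lt_csSup ⟨0, h0S⟩ (show s - (ε:ℝ) < s by
    have : (0:ℝ) < ε := hε
    linarith)
  have hδ'S := hSc δ hδ
  have hδ'0 : 0 ≤ max δ 0 := le_max_right _ _
  have : s ≤ max δ 0 + ε := by
    have : δ ≤ max δ 0 := le_max_left _ _
    linarith
  calc ENNReal.ofReal s ≤ ENNReal.ofReal (max δ 0 + ε) := ENNReal.ofReal_le_ofReal this
    _ = ENNReal.ofReal (max δ 0) + ENNReal.ofReal ε := ENNReal.ofReal_add hδ'0 ε.coe_nonneg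
    _ ≤ sSup ((fun δ : ℝ => ENNReal.ofReal δ) '' S) + ε := by
        gcongr
        · exact le_sSup ⟨_, hδ'S, rfl⟩
        · simp

lemma zig_neg {n : ℕ} {I : Set (Pt n)} {a b : Pt n} (h : Zigzag I a b) :
    Zigzag {p : Pt n | -p ∈ I} (-a) (-b) := by
  induction h with
  | refl => exact Relation.ReflTransGen.refl
  | tail h1 h2 ih =>
      refine ih.tail ⟨?_, ?_, ?_⟩
      · simpa using h2.1
      · simpa using h2.2.1
      · exact (h2.2.2.imp (fun h => neg_le_neg h) (fun h => neg_le_neg h)).symm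

/-- for x in an interval I, the diagonal distance to the upper
boundary is sup{δ : x + δ⃗ ∈ I}, and to the lower boundary is
sup{δ : x − δ⃗ ∈ I}. -/
theorem stmt4 {n : ℕ} (I : Set (Pt n)) (hI : IsPInterval I) (x : Pt n)
    (hx : x ∈ I) :
    dl x (upperBd I) = sSup ((fun δ : ℝ => ENNReal.ofReal δ) ''
        {δ : ℝ | x + diag n δ ∈ I}) ∧
    dl x (lowerBd I) = sSup ((fun δ : ℝ => ENNReal.ofReal δ) ''
        {δ : ℝ | x - diag n δ ∈ I}) := by
  constructor
  · exact key_upper I hI x hx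
  · set I' : Set (Pt n) := {p : Pt n | -p ∈ I} with hI'
    have hI'int : IsPInterval I' := by
      refine ⟨⟨-hI.1.choose, by simpa [hI'] using hI.1.choose_spec⟩, ?_, ?_⟩
      · intro p hp q hq r h1 h2
        exact hI.2.1 _ hq _ hp _ (fun i => neg_le_neg (h2 i)) (fun i => neg_le_neg (h1 i))
      · intro p hp q hq
        have := zig_neg (hI.2.2 _ hp _ hq)
        simpa using this
    have hx' : -x ∈ I' := by simpa [hI'] using hx
    have hub : upperBd I' = {p : Pt n | -p ∈ lowerBd I} := by
      ext p
      have hcl : p ∈ closure I' ↔ -p ∈ closure I := by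
        have h : I' = -I := rfl
        rw [h, ← neg_closure]
        exact Set.mem_neg
      constructor
      · rintro ⟨h1, h2⟩
        refine ⟨hcl.mp h1, fun z hz hzI => ?_⟩
        exact h2 (-z) (fun i => by have := hz i; simpa using neg_lt_neg this)
          (by simpa [hI'] using hzI)
      · rintro ⟨h1, h2⟩
        refine ⟨hcl.mpr h1, fun y hy hyI => ?_⟩
        exact h2 (-y) (fun i => by have := hy i; simpa using neg_lt_neg this) hyI
    have hdl : dl x (lowerBd I) = dl (-x) (upperBd I') := by
      rw [hub]
      apply le_antisymm
      · refine le_iInf fun α => le_iInf fun hα => ?_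
        have : x + diag n (-α) ∈ lowerBd I := by
          have : -(-x + diag n α) = x + diag n (-α) := by
            funext i; simp [diag]; ring
          rw [← this]; exact hα
        calc dl x (lowerBd I) ≤ ⨅ (_ : x + diag n (-α) ∈ lowerBd I), ENNReal.ofReal |(-α)| :=
              iInf_le _ (-α)
          _ ≤ ENNReal.ofReal |(-α)| := iInf_le _ this
          _ = ENNReal.ofReal |α| := by rw [abs_neg]
      · refine le_iInf fun α => le_iInf fun hα => ?_
        have : -(-x + diag n (-α)) ∈ lowerBd I := by
          have : -(-x + diag n (-α)) = x + diag n α := by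
            funext i; simp [diag]; ring
          rw [this]; exact hα
        calc dl (-x) {p : Pt n | -p ∈ lowerBd I}
              ≤ ⨅ (_ : -x + diag n (-α) ∈ {p : Pt n | -p ∈ lowerBd I}), ENNReal.ofReal |(-α)| :=
              iInf_le _ (-α)
          _ ≤ ENNReal.ofReal |(-α)| := iInf_le _ this
          _ = ENNReal.ofReal |α| := by rw [abs_neg]
    have hset : {δ : ℝ | -x + diag n δ ∈ I'} = {δ : ℝ | x - diag n δ ∈ I} := by
      ext δ
      have : -(-x + diag n δ) = x - diag n δ := by
        funext i; simp [diag]; ring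
      simp only [hI', Set.mem_setOf_eq, this]
    rw [hdl, key_upper I' hI'int (-x) hx', hset]


end
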